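/- Let u, v : ℝ → ℝ be C² with v > 0 and u'² + v'² = v² everywhere, and let κ : ℝ → ℝ satisfy u'' = −v'κ + 2u'v'/v and v'' = u'κ − (u'² − v'²)/v. Let φ : ℝ² → ℝ be such that x ↦ φ(x,y₀) is differentiable, and fix (x₀, y₀) ∈ ℝ². Define E : ℝ → ℝ by E(t) = [ (u'(x₀) − t·A)² + (v'(x₀) + t·B)² ] / (v(x₀) + t·u'(x₀)·φ(x₀,y₀))², where A = v''(x₀)·φ(x₀,y₀) + v'(x₀)·∂φ/∂x(x₀,y₀) and B = u''(x₀)·φ(x₀,y₀) + u'(x₀)·∂φ/∂x(x₀,y₀). Then E(0) = 1 and E'(0) = −2·κ(x₀)·φ(x₀,y₀). -/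

import Mathlib

/-- For the normal variation of the profile curve, the dx⊗dx
metric coefficient E(t) satisfies E(0) = 1 and E'(0) = −2κφ. -/
theorem metric_coefficient_first_order
    (u v κ : ℝ → ℝ) (φ : ℝ → ℝ → ℝ) (x₀ y₀ : ℝ)
    (hu : ContDiff ℝ 2 u) (hv : ContDiff ℝ 2 v)
    (hvpos : ∀ x, 0 < v x)
    (harc : ∀ x, (deriv u x) ^ 2 + (deriv v x) ^ 2 = (v x) ^ 2)
    (hu'' : ∀ x, deriv (deriv u) x = -(deriv v x) * κ x + 2 * deriv u x * deriv v x / v x)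
    (hv'' : ∀ x, deriv (deriv v) x =
      deriv u x * κ x - ((deriv u x) ^ 2 - (deriv v x) ^ 2) / v x)
    (hφ : Differentiable ℝ (fun x => φ x y₀))
    (A B : ℝ)
    (hA : A = deriv (deriv v) x₀ * φ x₀ y₀ + deriv v x₀ * deriv (fun x => φ x y₀) x₀)
    (hB : B = deriv (deriv u) x₀ * φ x₀ y₀ + deriv u x₀ * deriv (fun x => φ x y₀) x₀)
    (E : ℝ → ℝ)
    (hE : ∀ t, E t = ((deriv u x₀ - t * A) ^ 2 + (deriv v x₀ + t * B) ^ 2)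
        / (v x₀ + t * deriv u x₀ * φ x₀ y₀) ^ 2) :
    E 0 = 1 ∧ deriv E 0 = -2 * κ x₀ * φ x₀ y₀ := by
  set a := deriv u x₀ with ha
  set b := deriv v x₀ with hb
  set w := v x₀ with hw
  set p := φ x₀ y₀ with hp
  have hwpos : 0 < w := hvpos x₀
  have hwne : w ≠ 0 := ne_of_gt hwpos
  have harc0 : a ^ 2 + b ^ 2 = w ^ 2 := harc x₀
  -- E(0) = 1
  have hE0 : E 0 = 1 := by
    rw [hE 0]
    simp only [zero_mul, mul_zero, sub_zero, add_zero]
    rw [harc0]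
    field_simp
  refine ⟨hE0, ?_⟩
  -- derivative
  have hEfun : E = fun t => ((a - t * A) ^ 2 + (b + t * B) ^ 2) / (w + t * a * p) ^ 2 := by
    funext t; exact hE t
  have hnum : HasDerivAt (fun t : ℝ => (a - t * A) ^ 2 + (b + t * B) ^ 2)
      (2 * (a - 0 * A) ^ 1 * (0 - A) + 2 * (b + 0 * B) ^ 1 * (0 + B)) 0 := by
    have h1 : HasDerivAt (fun t : ℝ => a - t * A) (0 - A) 0 := by
      simpa using ((hasDerivAt_id 0).mul_const A).const_sub a
    have h2 : HasDerivAt (fun t : ℝ => b + t * B) (0 + B) 0 := by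
      simpa using ((hasDerivAt_id 0).mul_const B).const_add b
    exact (h1.pow 2).add (h2.pow 2)
  have hden : HasDerivAt (fun t : ℝ => (w + t * a * p) ^ 2)
      (2 * (w + 0 * a * p) ^ 1 * (a * p)) 0 := by
    have h3 : HasDerivAt (fun t : ℝ => w + t * a * p) (a * p) 0 := by
      have := ((hasDerivAt_id (0:ℝ)).mul_const (a * p)).const_add w
      simpa [mul_assoc] using this
    exact h3.pow 2
  have hdenne : (w + 0 * a * p) ^ 2 ≠ 0 := by
    simpa using pow_ne_zero 2 hwne
  have hD : HasDerivAt E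
      (((2 * (a - 0 * A) ^ 1 * (0 - A) + 2 * (b + 0 * B) ^ 1 * (0 + B)) * (w + 0 * a * p) ^ 2
        - ((a - 0 * A) ^ 2 + (b + 0 * B) ^ 2) * (2 * (w + 0 * a * p) ^ 1 * (a * p)))
        / ((w + 0 * a * p) ^ 2) ^ 2) 0 := by
    rw [hEfun]
    exact hnum.div hden hdenne
  rw [hD.deriv]
  simp only [zero_mul, mul_zero, sub_zero, add_zero, zero_sub, zero_add, pow_one]
  -- now pure algebra
  have hA' : A = (a * κ x₀ - (a ^ 2 - b ^ 2) / w) * p + b * deriv (fun x => φ x y₀) x₀ := by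
    rw [hA, hv'' x₀]
  have hB' : B = (-b * κ x₀ + 2 * a * b / w) * p + a * deriv (fun x => φ x y₀) x₀ := by
    rw [hB, hu'' x₀]
  set q := deriv (fun x => φ x y₀) x₀
  rw [hA', hB']
  field_simp
  linear_combination (-w * κ x₀ * p) * harc0
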